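/- Every n-vertex 3-uniform hypergraph in which no 4 vertices span exactly 2 edges and no 4 vertices span exactly 4 edges has at most C(n-1, 2) edges. -/

import Mathlib

open Finset

/-- Number of edges of the 3-graph `H` spanned by the vertex set `X`. -/
def spanCount {V : Type*} [DecidableEq V] (H : Finset (Finset V)) (X : Finset V) : ℕ :=
  ((X.powersetCard 3).filter (· ∈ H)).card

namespace Stmt6Aux

variable {V : Type*} [DecidableEq V] {H : Finset (Finset V)}

lemma t12 (x y z : V) : ({x,y,z} : Finset V) = {y,x,z} := Finset.insert_comm x y {z}

lemma t23 (x y z : V) : ({x,y,z} : Finset V) = {x,z,y} :=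
  congrArg (insert x) (Finset.pair_comm y z)

lemma E12 {x y z : V} (h : ({x,y,z} : Finset V) ∈ H) : ({y,x,z} : Finset V) ∈ H := by
  rwa [t12] at h

lemma E23 {x y z : V} (h : ({x,y,z} : Finset V) ∈ H) : ({x,z,y} : Finset V) ∈ H := by
  rwa [t23] at h

lemma card3 {x y z : V} (hxy : x ≠ y) (hxz : x ≠ z) (hyz : y ≠ z) :
    ({x,y,z} : Finset V).card = 3 := by
  rw [card_insert_of_notMem (by simp [hxy, hxz]), card_insert_of_notMem (by simp [hyz]),
    card_singleton]

lemma card4 {a b c d : V} (hab : a ≠ b) (hac : a ≠ c) (had : a ≠ d) (hbc : b ≠ c)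
    (hbd : b ≠ d) (hcd : c ≠ d) : ({a,b,c,d} : Finset V).card = 4 := by
  rw [card_insert_of_notMem (by simp [hab, hac, had]), card3 hbc hbd hcd]

lemma quad_powerset {a b c d : V} (hab : a ≠ b) (hac : a ≠ c) (had : a ≠ d) (hbc : b ≠ c)
    (hbd : b ≠ d) (hcd : c ≠ d) :
    ({a,b,c,d} : Finset V).powersetCard 3 =
      {{a,b,c},{a,b,d},{a,c,d},{b,c,d}} := by
  ext S
  simp only [Finset.mem_powersetCard, Finset.mem_insert, Finset.mem_singleton]
  constructor
  · rintro ⟨hsub, hcard⟩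
    by_cases ha : a ∈ S
    · by_cases hb : b ∈ S
      · by_cases hc : c ∈ S
        · left
          refine (Finset.eq_of_subset_of_card_le ?_ ?_).symm
          · intro x hx
            simp only [Finset.mem_insert, Finset.mem_singleton] at hx
            rcases hx with rfl | rfl | rfl <;> assumption
          · rw [hcard, card3 hab hac hbc]
        · right; left
          refine Finset.eq_of_subset_of_card_le ?_ ?_
          · intro x hx
            have := hsub hx
            simp only [Finset.mem_insert, Finset.mem_singleton] at this ⊢
            rcases this with rfl | rfl | rfl | rfl
            · left; rfl
            · right; left; rfl
            · exact absurd hx hc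
            · right; right; rfl
          · rw [hcard, card3 hab had hbd]
      · right; right; left
        refine Finset.eq_of_subset_of_card_le ?_ ?_
        · intro x hx
          have := hsub hx
          simp only [Finset.mem_insert, Finset.mem_singleton] at this ⊢
          rcases this with rfl | rfl | rfl | rfl
          · left; rfl
          · exact absurd hx hb
          · right; left; rfl
          · right; right; rfl
        · rw [hcard, card3 hac had hcd]
    · right; right; right
      refine Finset.eq_of_subset_of_card_le ?_ ?_
      · intro x hx
        have := hsub hx
        simp only [Finset.mem_insert, Finset.mem_singleton] at this ⊢
        rcases this with rfl | rfl | rfl | rfl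
        · exact absurd hx ha
        · left; rfl
        · right; left; rfl
        · right; right; rfl
      · rw [hcard, card3 hbc hbd hcd]
  · rintro (rfl | rfl | rfl | rfl)
    · exact ⟨by intro x hx; simp only [Finset.mem_insert, Finset.mem_singleton] at hx ⊢; tauto,
        card3 hab hac hbc⟩
    · exact ⟨by intro x hx; simp only [Finset.mem_insert, Finset.mem_singleton] at hx ⊢; tauto,
        card3 hab had hbd⟩
    · exact ⟨by intro x hx; simp only [Finset.mem_insert, Finset.mem_singleton] at hx ⊢; tauto,
        card3 hac had hcd⟩
    · exact ⟨by intro x hx; simp only [Finset.mem_insert, Finset.mem_singleton] at hx ⊢; tauto,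
        card3 hbc hbd hcd⟩

lemma spanCount_quad {a b c d : V} (hab : a ≠ b) (hac : a ≠ c) (had : a ≠ d) (hbc : b ≠ c)
    (hbd : b ≠ d) (hcd : c ≠ d) :
    spanCount H {a,b,c,d} =
      (if ({a,b,c} : Finset V) ∈ H then 1 else 0) +
      (if ({a,b,d} : Finset V) ∈ H then 1 else 0) +
      (if ({a,c,d} : Finset V) ∈ H then 1 else 0) +
      (if ({b,c,d} : Finset V) ∈ H then 1 else 0) := by
  have h12 : ({a,b,c} : Finset V) ≠ {a,b,d} := by
    intro h
    have : d ∈ ({a,b,c} : Finset V) := by rw [h]; simp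
    simp only [Finset.mem_insert, Finset.mem_singleton] at this
    rcases this with rfl | rfl | rfl
    exacts [had rfl, hbd rfl, hcd rfl]
  have h13 : ({a,b,c} : Finset V) ≠ {a,c,d} := by
    intro h
    have : d ∈ ({a,b,c} : Finset V) := by rw [h]; simp
    simp only [Finset.mem_insert, Finset.mem_singleton] at this
    rcases this with rfl | rfl | rfl
    exacts [had rfl, hbd rfl, hcd rfl]
  have h14 : ({a,b,c} : Finset V) ≠ {b,c,d} := by
    intro h
    have : a ∈ ({b,c,d} : Finset V) := by rw [← h]; simp
    simp only [Finset.mem_insert, Finset.mem_singleton] at this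
    rcases this with rfl | rfl | rfl
    exacts [hab rfl, hac rfl, had rfl]
  have h23 : ({a,b,d} : Finset V) ≠ {a,c,d} := by
    intro h
    have : b ∈ ({a,c,d} : Finset V) := by rw [← h]; simp
    simp only [Finset.mem_insert, Finset.mem_singleton] at this
    rcases this with rfl | rfl | rfl
    exacts [hab rfl, hbc rfl, hbd rfl]
  have h24 : ({a,b,d} : Finset V) ≠ {b,c,d} := by
    intro h
    have : a ∈ ({b,c,d} : Finset V) := by rw [← h]; simp
    simp only [Finset.mem_insert, Finset.mem_singleton] at this
    rcases this with rfl | rfl | rfl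
    exacts [hab rfl, hac rfl, had rfl]
  have h34 : ({a,c,d} : Finset V) ≠ {b,c,d} := by
    intro h
    have : a ∈ ({b,c,d} : Finset V) := by rw [← h]; simp
    simp only [Finset.mem_insert, Finset.mem_singleton] at this
    rcases this with rfl | rfl | rfl
    exacts [hab rfl, hac rfl, had rfl]
  unfold spanCount
  rw [quad_powerset hab hac had hbc hbd hcd]
  rw [Finset.filter_insert, Finset.filter_insert, Finset.filter_insert, Finset.filter_singleton]
  split_ifs <;>
    simp_all [Finset.card_insert_of_notMem, Finset.mem_insert, Finset.mem_singleton]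

lemma pairlem (hfree : ∀ X : Finset V, X.card = 4 → spanCount H X ≠ 2 ∧ spanCount H X ≠ 4)
    {a b c d : V} (hab : a ≠ b) (hac : a ≠ c) (had : a ≠ d) (hbc : b ≠ c)
    (hbd : b ≠ d) (hcd : c ≠ d)
    (h1 : ({a,b,c} : Finset V) ∈ H) (h2 : ({a,b,d} : Finset V) ∈ H) :
    (({a,c,d} : Finset V) ∈ H) ↔ (({b,c,d} : Finset V) ∉ H) := by
  have hc4 := card4 hab hac had hbc hbd hcd
  have hval := hfree {a,b,c,d} hc4
  rw [spanCount_quad hab hac had hbc hbd hcd] at hval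
  by_cases h3 : ({a,c,d} : Finset V) ∈ H <;> by_cases h4 : ({b,c,d} : Finset V) ∈ H <;>
    simp [h1, h2, h3, h4] at hval ⊢

lemma key1 (hfree : ∀ X : Finset V, X.card = 4 → spanCount H X ≠ 2 ∧ spanCount H X ≠ 4)
    {a b c d w : V}
    (hab : a ≠ b) (hac : a ≠ c) (had : a ≠ d) (haw : a ≠ w)
    (hbc : b ≠ c) (hbd : b ≠ d) (hbw : b ≠ w)
    (hcd : c ≠ d) (hcw : c ≠ w) (hdw : d ≠ w)
    (h1 : ({a,b,c} : Finset V) ∈ H) (h2 : ({a,b,d} : Finset V) ∈ H)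
    (h3 : ({a,c,d} : Finset V) ∈ H) (h4 : ({b,c,d} : Finset V) ∉ H)
    (h5 : ({b,c,w} : Finset V) ∈ H) (h6 : ({a,b,w} : Finset V) ∈ H)
    (h7 : ({a,c,w} : Finset V) ∉ H) : False := by
  have step : ({a,d,w} : Finset V) ∈ H ↔ ({b,d,w} : Finset V) ∉ H :=
    pairlem hfree hab had haw hbd hbw hdw h2 h6
  by_cases hadw : ({a,d,w} : Finset V) ∈ H
  · have hbdw : ({b,d,w} : Finset V) ∉ H := step.mp hadw
    have p2 : ({a,c,w} : Finset V) ∈ H ↔ ({d,c,w} : Finset V) ∉ H :=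
      pairlem hfree had hac haw (Ne.symm hcd) hdw hcw (E23 h3) hadw
    have hdcw : ({d,c,w} : Finset V) ∈ H := by
      by_contra hh; exact h7 (p2.mpr hh)
    have p3 : ({c,b,d} : Finset V) ∈ H ↔ ({w,b,d} : Finset V) ∉ H :=
      pairlem hfree hcw (Ne.symm hbc) hcd (Ne.symm hbw) (Ne.symm hdw) hbd
        (E23 (E12 h5)) (E23 (E12 hdcw))
    have : ({w,b,d} : Finset V) ∈ H := by
      by_contra hh; exact h4 (E12 (p3.mpr hh))
    exact hbdw (E23 (E12 this))
  · have hbdw : ({b,d,w} : Finset V) ∈ H := by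
      by_contra hh; exact hadw (step.mpr hh)
    have p2 : ({b,c,d} : Finset V) ∈ H ↔ ({w,c,d} : Finset V) ∉ H :=
      pairlem hfree hbw hbc hbd (Ne.symm hcw) (Ne.symm hdw) hcd (E23 h5) (E23 hbdw)
    have hwcd : ({w,c,d} : Finset V) ∈ H := by
      by_contra hh; exact h4 (p2.mpr hh)
    have p3 : ({c,a,w} : Finset V) ∈ H ↔ ({d,a,w} : Finset V) ∉ H :=
      pairlem hfree hcd (Ne.symm hac) hcw (Ne.symm had) hdw haw
        (E23 (E12 h3)) (E23 (E12 hwcd))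
    have : ({d,a,w} : Finset V) ∈ H := by
      by_contra hh; exact h7 (E12 (p3.mpr hh))
    exact hadw (E12 this)

lemma key (hfree : ∀ X : Finset V, X.card = 4 → spanCount H X ≠ 2 ∧ spanCount H X ≠ 4)
    {a b c d w : V}
    (hab : a ≠ b) (hac : a ≠ c) (had : a ≠ d)
    (hbc : b ≠ c) (hbd : b ≠ d) (hcd : c ≠ d)
    (h1 : ({a,b,c} : Finset V) ∈ H) (h2 : ({a,b,d} : Finset V) ∈ H)
    (h3 : ({a,c,d} : Finset V) ∈ H) (h4 : ({b,c,d} : Finset V) ∉ H)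
    (hwa : w ≠ a) (hwb : w ≠ b) (hwc : w ≠ c)
    (h5 : ({b,c,w} : Finset V) ∈ H) : False := by
  by_cases hwd : w = d
  · subst hwd; exact h4 h5
  · have p : ({b,a,w} : Finset V) ∈ H ↔ ({c,a,w} : Finset V) ∉ H :=
      pairlem hfree hbc (Ne.symm hab) (Ne.symm hwb) (Ne.symm hac) (Ne.symm hwc) (Ne.symm hwa)
        (E23 (E12 h1)) h5
    by_cases habw : ({a,b,w} : Finset V) ∈ H
    · have hacw : ({a,c,w} : Finset V) ∉ H := fun h => (p.mp (E12 habw)) (E12 h)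
      exact key1 hfree hab hac had (Ne.symm hwa) hbc hbd (Ne.symm hwb) hcd (Ne.symm hwc)
        (fun h => hwd h.symm) h1 h2 h3 h4 h5 habw hacw
    · have hacw : ({a,c,w} : Finset V) ∈ H := by
        by_contra hh
        exact habw (E12 (p.mpr (fun h => hh (E12 h))))
      exact key1 hfree hac hab had (Ne.symm hwa) (Ne.symm hbc) hcd (Ne.symm hwc) hbd
        (Ne.symm hwb) (fun h => hwd h.symm) (E23 h1) h3 h2 (fun h => h4 (E12 h)) (E12 h5)
        hacw habw

lemma neighbor_decomp (h3 : ∀ e ∈ H, e.card = 3) {e f : Finset V}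
    (hf : f ∈ H) (hcard : (e ∩ f).card = 2) :
    ∃ w, w ∉ e ∧ f = insert w (e ∩ f) := by
  have h1 : (f \ (e ∩ f)).card = 1 := by
    rw [card_sdiff_of_subset inter_subset_right, h3 f hf, hcard]
  obtain ⟨w, hw⟩ := Finset.card_eq_one.mp h1
  have hwmem : w ∈ f \ (e ∩ f) := by rw [hw]; simp
  rw [Finset.mem_sdiff] at hwmem
  refine ⟨w, ?_, ?_⟩
  · intro hwe
    exact hwmem.2 (Finset.mem_inter.mpr ⟨hwe, hwmem.1⟩)
  · have := Finset.sdiff_union_of_subset (inter_subset_right (s₁ := e) (s₂ := f))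
    rw [Finset.insert_eq, ← hw]
    exact this.symm

lemma exists_goodApex (h3 : ∀ e ∈ H, e.card = 3)
    (hfree : ∀ X : Finset V, X.card = 4 → spanCount H X ≠ 2 ∧ spanCount H X ≠ 4)
    {e : Finset V} (he : e ∈ H) :
    ∃ a, a ∈ e ∧ ∀ f ∈ H, f ≠ e → (e ∩ f).card = 2 → a ∈ f := by
  by_cases hnb : ∃ f ∈ H, f ≠ e ∧ (e ∩ f).card = 2
  case neg =>
    have hne : e.Nonempty := Finset.card_pos.mp (by rw [h3 e he]; omega)
    obtain ⟨a, ha⟩ := hne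
    exact ⟨a, ha, fun f hf hfe hc => absurd ⟨f, hf, hfe, hc⟩ hnb⟩
  case pos =>
    obtain ⟨f, hf, hfe, hcard⟩ := hnb
    obtain ⟨u, v, huv, hP⟩ := Finset.card_eq_two.mp hcard
    obtain ⟨d, hd, hfeq⟩ := neighbor_decomp h3 hf hcard
    obtain ⟨c₀, hc₀, heeq⟩ := neighbor_decomp h3 he (by rwa [inter_comm] : (f ∩ e).card = 2)
    rw [inter_comm] at heeq
    rw [hP] at hfeq heeq
    -- distinctness
    have hue : u ∈ e := by rw [heeq]; simp
    have hve : v ∈ e := by rw [heeq]; simp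
    have huf : u ∈ f := by rw [hfeq]; simp
    have hvf : v ∈ f := by rw [hfeq]; simp
    have hc₀u : c₀ ≠ u := fun h => hc₀ (h ▸ huf)
    have hc₀v : c₀ ≠ v := fun h => hc₀ (h ▸ hvf)
    have hdu : d ≠ u := fun h => hd (h ▸ hue)
    have hdv : d ≠ v := fun h => hd (h ▸ hve)
    have hc₀e : c₀ ∈ e := by rw [heeq]; simp
    have hdf : d ∈ f := by rw [hfeq]; simp
    have hc₀d : c₀ ≠ d := fun h => hc₀ (h ▸ hdf)
    have hEe : ({u,v,c₀} : Finset V) ∈ H := by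
      have h' : ({u,v,c₀} : Finset V) = {c₀,u,v} := ((t12 c₀ u v).trans (t23 u c₀ v)).symm
      rwa [h', ← heeq]
    have hEf : ({u,v,d} : Finset V) ∈ H := by
      have h' : ({u,v,d} : Finset V) = {d,u,v} := ((t12 d u v).trans (t23 u d v)).symm
      rwa [h', ← hfeq]
    have hiff : ({u,c₀,d} : Finset V) ∈ H ↔ ({v,c₀,d} : Finset V) ∉ H :=
      pairlem hfree huv (Ne.symm hc₀u) (Ne.symm hdu) (Ne.symm hc₀v) (Ne.symm hdv) hc₀d hEe hEf
    -- helper to decompose an arbitrary neighbour avoiding the chosen apex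
    have main : ∀ p q : V, p ∈ e → q ∈ e → p ≠ q → ({p, q, c₀} : Finset V) ∈ H →
        ({p, q, d} : Finset V) ∈ H → ({p, c₀, d} : Finset V) ∈ H →
        ({q, c₀, d} : Finset V) ∉ H → p ≠ c₀ → q ≠ c₀ →
        (∀ f' ∈ H, f' ≠ e → (e ∩ f').card = 2 → p ∈ f') := by
      intro p q hpe hqe hpq hE1 hE2 hE3 hE4 hpc hqc f' hf' hf'e hc2
      by_contra hpf'
      have hpuv : p = u ∨ p = v := by
        have hpe' := hpe
        rw [heeq] at hpe'
        simp only [Finset.mem_insert, Finset.mem_singleton] at hpe'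
        rcases hpe' with h | h | h
        · exact absurd h hpc
        · exact Or.inl h
        · exact Or.inr h
      have hquv : q = u ∨ q = v := by
        have hqe' := hqe
        rw [heeq] at hqe'
        simp only [Finset.mem_insert, Finset.mem_singleton] at hqe'
        rcases hqe' with h | h | h
        · exact absurd h hqc
        · exact Or.inl h
        · exact Or.inr h
      have huvpq : ∀ x, x ∈ e → x = c₀ ∨ x = p ∨ x = q := by
        intro x hx
        rw [heeq] at hx
        simp only [Finset.mem_insert, Finset.mem_singleton] at hx
        rcases hpuv with rfl | rfl <;> rcases hquv with rfl | rfl <;> tauto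
      have hsub : e ∩ f' ⊆ ({q, c₀} : Finset V) := by
        intro x hx
        rw [Finset.mem_inter] at hx
        have hxp : x ≠ p := fun h => hpf' (h ▸ hx.2)
        rcases huvpq x hx.1 with rfl | rfl | rfl
        · simp
        · exact absurd rfl hxp
        · simp
      have heq2 : e ∩ f' = ({q, c₀} : Finset V) :=
        Finset.eq_of_subset_of_card_le hsub
          (by rw [hc2, Finset.card_insert_of_notMem (by simp [hqc]), card_singleton])
      obtain ⟨w, hwe, hf'eq⟩ := neighbor_decomp h3 hf' hc2
      rw [heq2] at hf'eq
      have hE5 : ({q, c₀, w} : Finset V) ∈ H := by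
        have h' : ({q, c₀, w} : Finset V) = {w,q,c₀} := ((t12 w q c₀).trans (t23 q w c₀)).symm
        rwa [h', ← hf'eq]
      have hwq : w ≠ q := fun h => hwe (h ▸ hqe)
      have hwc₀ : w ≠ c₀ := fun h => hwe (h ▸ hc₀e)
      have hwp : w ≠ p := fun h => hwe (h ▸ hpe)
      exact key hfree hpq hpc (fun h => hd (by rw [← h]; exact hpe))
        hqc (fun h => hd (by rw [← h]; exact hqe)) hc₀d
        hE1 hE2 hE3 hE4 hwp hwq hwc₀ hE5
    by_cases hcase : ({u,c₀,d} : Finset V) ∈ H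
    · exact ⟨u, hue, main u v hue hve huv hEe hEf hcase (hiff.mp hcase)
        (Ne.symm hc₀u) (Ne.symm hc₀v)⟩
    · have hv : ({v,c₀,d} : Finset V) ∈ H := by
        by_contra hh; exact hcase (hiff.mpr hh)
      exact ⟨v, hve, main v u hve hue (Ne.symm huv) (E12 hEe) (E12 hEf) hv
        (fun h => hcase h) (Ne.symm hc₀v) (Ne.symm hc₀u)⟩

end Stmt6Aux

theorem stmt_6 {V : Type*} [Fintype V] [DecidableEq V] (H : Finset (Finset V))
    (h3 : ∀ e ∈ H, e.card = 3)
    (hfree : ∀ X : Finset V, X.card = 4 → spanCount H X ≠ 2 ∧ spanCount H X ≠ 4) :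
    H.card ≤ (Fintype.card V - 1).choose 2 := by
  classical
  set n := Fintype.card V with hn
  by_cases hHe : H = ∅
  · simp [hHe]
  have hVne : Nonempty V := by
    obtain ⟨e, he⟩ := Finset.nonempty_iff_ne_empty.mpr hHe
    have hc := h3 e he
    have : e.Nonempty := Finset.card_pos.mp (by omega)
    exact ⟨this.choose⟩
  have hex : ∀ e, e ∈ H → ∃ a, a ∈ e ∧ ∀ f ∈ H, f ≠ e → (e ∩ f).card = 2 → a ∈ f :=
    fun e he => Stmt6Aux.exists_goodApex h3 hfree he
  choose! ap hap using hex
  have hap1 : ∀ e ∈ H, ap e ∈ e := fun e he => (hap e he).1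
  have hap2 : ∀ e ∈ H, ∀ f ∈ H, f ≠ e → (e ∩ f).card = 2 → ap e ∈ f :=
    fun e he => (hap e he).2
  have hinter : ∀ e ∈ H, ∀ f ∈ H, e ≠ f → (e ∩ f).card ≤ 2 := by
    intro e he f hf hne
    by_contra hh
    push_neg at hh
    have h1 : e ∩ f = e :=
      Finset.eq_of_subset_of_card_le inter_subset_left (by rw [h3 e he]; omega)
    have h2 : e ⊆ f := by rw [← h1]; exact inter_subset_right
    exact hne (Finset.eq_of_subset_of_card_le h2 (by rw [h3 e he, h3 f hf]))
  have hinj : Set.InjOn (fun e : Finset V => e.erase (ap e)) ↑H := by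
    intro e he f hf hEq
    by_contra hne
    simp only at hEq
    have hPe : (e.erase (ap e)).card = 2 := by
      rw [Finset.card_erase_of_mem (hap1 e he), h3 e he]
    have hsub : e.erase (ap e) ⊆ e ∩ f := by
      intro x hx
      refine Finset.mem_inter.mpr ⟨Finset.erase_subset _ _ hx, ?_⟩
      rw [hEq] at hx
      exact Finset.erase_subset _ _ hx
    have hc2 : (e ∩ f).card = 2 :=
      le_antisymm (hinter e he f hf hne) (by rw [← hPe]; exact Finset.card_le_card hsub)
    have hmem : ap e ∈ f := hap2 e he f hf (fun h => hne h.symm) hc2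
    have h5 : ap e ∈ e ∩ f := Finset.mem_inter.mpr ⟨hap1 e he, hmem⟩
    have heq2 : e.erase (ap e) = e ∩ f :=
      Finset.eq_of_subset_of_card_le hsub (by rw [hPe, hc2])
    rw [← heq2] at h5
    exact Finset.notMem_erase _ _ h5
  set U := H.image (fun e => e.erase (ap e)) with hU
  have hcardU : U.card = H.card := Finset.card_image_of_injOn hinj
  have hunused : ∀ e ∈ H, ∀ x ∈ e.erase (ap e), ({ap e, x} : Finset V) ∉ U := by
    intro e he x hx hmem
    obtain ⟨f, hf, hfe⟩ := Finset.mem_image.mp hmem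
    by_cases hef : f = e
    · subst hef
      have : ap f ∈ f.erase (ap f) := by rw [hfe]; simp
      exact Finset.notMem_erase _ _ this
    · have hape_f : ap e ∈ f := Finset.erase_subset _ _ (by rw [hfe]; simp)
      have hx_f : x ∈ f := Finset.erase_subset _ _ (by rw [hfe]; simp)
      have hx_e : x ∈ e := Finset.erase_subset _ _ hx
      have hxne : ap e ≠ x := fun h => Finset.notMem_erase (ap e) e (h ▸ hx)
      have hc2 : (e ∩ f).card = 2 := by
        refine le_antisymm (hinter e he f hf (fun h => hef h.symm)) ?_
        have : ({ap e, x} : Finset V) ⊆ e ∩ f := by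
          intro y hy
          simp only [Finset.mem_insert, Finset.mem_singleton] at hy
          rcases hy with rfl | rfl
          · exact Finset.mem_inter.mpr ⟨hap1 e he, hape_f⟩
          · exact Finset.mem_inter.mpr ⟨hx_e, hx_f⟩
        calc 2 = ({ap e, x} : Finset V).card := by
                rw [Finset.card_insert_of_notMem (by simp [hxne]), card_singleton]
          _ ≤ (e ∩ f).card := Finset.card_le_card this
      have hapf_e : ap f ∈ e := hap2 f hf e he (fun h => hef h.symm) (by rwa [inter_comm])
      have h1 : ap f ∉ ({ap e, x} : Finset V) := by
        rw [← hfe]; exact Finset.notMem_erase _ _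
      simp only [Finset.mem_insert, Finset.mem_singleton, not_or] at h1
      have hsub3 : ({ap f, ap e, x} : Finset V) ⊆ e ∩ f := by
        intro y hy
        simp only [Finset.mem_insert, Finset.mem_singleton] at hy
        rcases hy with rfl | rfl | rfl
        · exact Finset.mem_inter.mpr ⟨hapf_e, hap1 f hf⟩
        · exact Finset.mem_inter.mpr ⟨hap1 e he, hape_f⟩
        · exact Finset.mem_inter.mpr ⟨hx_e, hx_f⟩
      have h33 : (3 : ℕ) ≤ (e ∩ f).card := by
        calc (3:ℕ) = ({ap f, ap e, x} : Finset V).card :=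
              (Stmt6Aux.card3 h1.1 h1.2 hxne).symm
          _ ≤ (e ∩ f).card := Finset.card_le_card hsub3
      omega
  -- the graph of unused pairs
  let G : SimpleGraph V :=
    { Adj := fun x y => x ≠ y ∧ ({x,y} : Finset V) ∉ U
      symm := by
        constructor
        intro x y h
        exact ⟨h.1.symm, by rw [Finset.pair_comm]; exact h.2⟩
      loopless := ⟨fun x h => h.1 rfl⟩ }
  have hGconn : ∀ x y : V, G.Reachable x y := by
    intro x y
    by_cases hxy : x = y
    · subst hxy; exact SimpleGraph.Reachable.refl x
    by_cases hmem : ({x,y} : Finset V) ∈ U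
    · obtain ⟨e, he, hfe⟩ := Finset.mem_image.mp hmem
      have hx : x ∈ e.erase (ap e) := by rw [hfe]; simp
      have hy : y ∈ e.erase (ap e) := by rw [hfe]; simp
      have hcx : ({ap e, x} : Finset V) ∉ U := hunused e he x hx
      have hcy : ({ap e, y} : Finset V) ∉ U := hunused e he y hy
      have hcxne : x ≠ ap e := Finset.ne_of_mem_erase hx
      have hcyne : y ≠ ap e := Finset.ne_of_mem_erase hy
      have hadj1 : G.Adj x (ap e) := ⟨hcxne, by rwa [Finset.pair_comm]⟩
      have hadj2 : G.Adj (ap e) y := ⟨fun h => hcyne h.symm, hcy⟩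
      exact (hadj1.reachable).trans hadj2.reachable
    · exact (SimpleGraph.Adj.reachable ⟨hxy, hmem⟩)
  obtain ⟨r⟩ := id hVne
  have hstep : ∀ v, v ≠ r → ∃ u, G.Adj v u ∧ G.dist u r < G.dist v r := by
    intro v hv
    obtain ⟨p, hp⟩ := (hGconn v r).exists_walk_length_eq_dist
    cases p with
    | nil => exact absurd rfl hv
    | @cons _ u _ h q =>
      refine ⟨u, h, ?_⟩
      have h1 : G.dist u r ≤ q.length := SimpleGraph.dist_le q
      have h2 : q.length + 1 = G.dist v r := by simpa using hp
      omega
  choose! nxt hnxt using hstep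
  set R := ((univ : Finset V).powersetCard 2) \ U with hR
  have hRmem : ∀ v ∈ (univ : Finset V).erase r, ({v, nxt v} : Finset V) ∈ R := by
    intro v hv
    have hvr : v ≠ r := Finset.ne_of_mem_erase hv
    have hadj := (hnxt v hvr).1
    rw [hR, Finset.mem_sdiff]
    constructor
    · rw [Finset.mem_powersetCard]
      exact ⟨Finset.subset_univ _, Finset.card_pair hadj.ne⟩
    · exact hadj.2
  have hRinj : Set.InjOn (fun v : V => ({v, nxt v} : Finset V)) ↑((univ : Finset V).erase r) := by
    intro v hv w hw heq
    by_contra hne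
    simp only at heq
    have hvr : v ≠ r := Finset.ne_of_mem_erase hv
    have hwr : w ≠ r := Finset.ne_of_mem_erase hw
    have hv' : v ∈ ({w, nxt w} : Finset V) := by rw [← heq]; simp
    have hw' : w ∈ ({v, nxt v} : Finset V) := by rw [heq]; simp
    simp only [Finset.mem_insert, Finset.mem_singleton] at hv' hw'
    rcases hv' with h1 | h1
    · exact hne h1
    rcases hw' with h2 | h2
    · exact hne h2.symm
    have d1 := (hnxt v hvr).2
    have d2 := (hnxt w hwr).2
    rw [← h2] at d1
    rw [← h1] at d2
    omega
  have hRcard : n - 1 ≤ R.card := by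
    have := Finset.card_le_card_of_injOn _ hRmem hRinj
    rwa [Finset.card_erase_of_mem (Finset.mem_univ r), Finset.card_univ, ← hn] at this
  have hUsub : U ⊆ (univ : Finset V).powersetCard 2 := by
    intro P hP
    obtain ⟨e, he, rfl⟩ := Finset.mem_image.mp hP
    rw [Finset.mem_powersetCard]
    exact ⟨Finset.subset_univ _, by rw [Finset.card_erase_of_mem (hap1 e he), h3 e he]⟩
  have hsum : R.card + U.card = n.choose 2 := by
    rw [hR, Finset.card_sdiff_add_card_eq_card hUsub, Finset.card_powersetCard,
      Finset.card_univ, ← hn]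
  have hn1 : 1 ≤ n := by rw [hn]; exact Fintype.card_pos
  have hch : n.choose 2 = (n - 1).choose 2 + (n - 1) := by
    obtain ⟨m, hm⟩ : ∃ m, n = m + 1 := ⟨n - 1, by omega⟩
    rw [hm, Nat.add_sub_cancel, Nat.choose_succ_succ, Nat.choose_one_right, Nat.add_comm]
  omega
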